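/- Let θ1 > 0, ν ∈ ℝ, M ∈ ℝ. Suppose p, q : (0,θ1) → ℝ are differentiable, p(θ) > 0 for all θ ∈ (0,θ1), and p'(θ) = q(θ) + ν·coth(θ)·p(θ) and q'(θ) = (M − ν(ν+1))·p(θ) − (ν+1)·coth(θ)·q(θ) on (0,θ1). Then Y(θ) := q(θ)/(sinh(θ)·p(θ)) + ν/(2·sinh²(θ/2)) satisfies, for all θ ∈ (0,θ1): Y'(θ) = −sinh(θ)·Y(θ)² + (2·(ν − cosh(θ))/sinh(θ))·Y(θ) + M/sinh(θ). -/

import Mathlib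

open Real Set

noncomputable section

/-- The hyperbolic cotangent. -/
def Real.coth (x : ℝ) : ℝ := Real.cosh x / Real.sinh x

/-- The Riccati equation (4.19): if `p`, `q` satisfy the raising/lowering
relations of the associated Legendre functions (with `p(θ) = P_ℓ^ν(cosh θ)`,
`q(θ) = P_ℓ^{ν+1}(cosh θ)`, `M = ℓ(ℓ+1)`), then
`Y(θ) = q(θ)/(sinh θ · p(θ)) + ν/(2 sinh²(θ/2))` satisfies
`Y' = -sinh θ · Y² + 2(ν - cosh θ)/sinh θ · Y + M/sinh θ`. -/
theorem riccati_equation (θ1 ν M : ℝ) (hθ1 : 0 < θ1)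
    (p q : ℝ → ℝ)
    (hppos : ∀ θ ∈ Ioo (0:ℝ) θ1, 0 < p θ)
    (hp : ∀ θ ∈ Ioo (0:ℝ) θ1,
      HasDerivAt p (q θ + ν * Real.coth θ * p θ) θ)
    (hq : ∀ θ ∈ Ioo (0:ℝ) θ1,
      HasDerivAt q ((M - ν * (ν + 1)) * p θ - (ν + 1) * Real.coth θ * q θ) θ)
    (Y : ℝ → ℝ)
    (hY : Y = fun θ : ℝ =>
      q θ / (Real.sinh θ * p θ) + ν / (2 * Real.sinh (θ / 2) ^ 2)) :
    ∀ θ ∈ Ioo (0:ℝ) θ1,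
      HasDerivAt Y
        (-Real.sinh θ * Y θ ^ 2 + (2 * (ν - Real.cosh θ) / Real.sinh θ) * Y θ
          + M / Real.sinh θ) θ := by
  intro θ hθ
  obtain ⟨hθ0, hθb⟩ := hθ
  have hs : 0 < Real.sinh θ := Real.sinh_pos_iff.2 hθ0
  have hh : 0 < Real.sinh (θ/2) := Real.sinh_pos_iff.2 (by linarith)
  have hk : 0 < Real.cosh (θ/2) := Real.cosh_pos _
  have hP : 0 < p θ := hppos θ ⟨hθ0, hθb⟩
  have hd1 : HasDerivAt (fun x => Real.sinh x * p x)
      (Real.cosh θ * p θ + Real.sinh θ * (q θ + ν * Real.coth θ * p θ)) θ :=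
    (Real.hasDerivAt_sinh θ).mul (hp θ ⟨hθ0, hθb⟩)
  have h1 : HasDerivAt (fun x => q x / (Real.sinh x * p x))
      ((((M - ν * (ν + 1)) * p θ - (ν + 1) * Real.coth θ * q θ) * (Real.sinh θ * p θ)
        - q θ * (Real.cosh θ * p θ + Real.sinh θ * (q θ + ν * Real.coth θ * p θ)))
        / (Real.sinh θ * p θ)^2) θ :=
    (hq θ ⟨hθ0, hθb⟩).div hd1 (by positivity)
  have hhalf : HasDerivAt (fun x : ℝ => Real.sinh (x/2)) (Real.cosh (θ/2) * (1/2)) θ := by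
    have := (Real.hasDerivAt_sinh (θ/2)).comp θ ((hasDerivAt_id θ).div_const 2)
    exact this
  have h2 : HasDerivAt (fun x => ν / (2 * Real.sinh (x/2)^2))
      ((0 * (2 * Real.sinh (θ/2)^2) - ν * (2 * (2 * Real.sinh (θ/2) ^ 1 * (Real.cosh (θ/2) * (1/2)))))
        / (2 * Real.sinh (θ/2)^2)^2) θ :=
    (hasDerivAt_const θ ν).div ((hhalf.pow 2).const_mul 2) (by positivity)
  have hD := h1.add h2
  rw [hY]
  have hYθ : (fun θ : ℝ => q θ / (Real.sinh θ * p θ) + ν / (2 * Real.sinh (θ / 2) ^ 2)) θ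
      = q θ / (Real.sinh θ * p θ) + ν / (2 * Real.sinh (θ / 2) ^ 2) := rfl
  convert hD using 1
  case e'_4 => rfl
  case e'_5 => rfl
  case e'_8 => rfl
  rw [hYθ]
  have hth : (2:ℝ) * (θ/2) = θ := by ring
  have hcosh : Real.cosh θ = 2 * Real.sinh (θ/2)^2 + 1 := by
    have e1 := Real.cosh_two_mul (θ/2)
    have e2 := Real.cosh_sq (θ/2)
    rw [hth] at e1; linarith
  have hsinh : Real.sinh θ = 2 * Real.sinh (θ/2) * Real.cosh (θ/2) := by
    have e1 := Real.sinh_two_mul (θ/2)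
    rw [hth] at e1; linarith
  have hpyth : Real.cosh (θ/2)^2 = Real.sinh (θ/2)^2 + 1 := Real.cosh_sq _
  rw [Real.coth, hcosh, hsinh]
  have h0 : Real.sinh (θ/2) ≠ 0 := ne_of_gt hh
  have k0 : Real.cosh (θ/2) ≠ 0 := ne_of_gt hk
  have P0 : p θ ≠ 0 := ne_of_gt hP
  field_simp

  linear_combination (-(4 * Real.sinh (θ/2) * q θ * p θ * ν) - 2 * Real.cosh (θ/2) * p θ^2 * ν * (ν-1)) * hpyth


end
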